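/- Define A = (ℕ₀ × ℕ₀) ∪ {⊤} with the total order given by lexicographic order on ℕ₀ × ℕ₀ and ⊤ as top element, with Gödel chain operations (min, max, Gödel implication, bottom (0,0), top ⊤), and quantifiers ∃⊤ = ∀⊤ = ⊤, ∀(a,b) = (a,0), ∃(a,b) = (a,0) if b = 0 and (a+1,0) if b ≠ 0. Then A is a monadic Gödel algebra, i.e., it satisfies axioms (M1)–(M4). -/

import Mathlib

/-- The chain `(ℕ₀ × ℕ₀) ∪ {⊤}` with the lexicographic order. -/
abbrev A18 : Type := WithTop (ℕ ×ₗ ℕ)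

/-- Gödel implication on the chain `A18`. -/
noncomputable def gimp (x y : A18) : A18 := if x ≤ y then ⊤ else y

/-- The universal quantifier: `∀(a,b) = (a,0)`, `∀⊤ = ⊤`. -/
def qU : A18 → A18 :=
  WithTop.map fun p : ℕ ×ₗ ℕ => toLex ((ofLex p).1, 0)

/-- The existential quantifier: `∃(a,0) = (a,0)`, `∃(a,b) = (a+1,0)` for `b ≠ 0`,
`∃⊤ = ⊤`. -/
def qE : A18 → A18 :=
  WithTop.map fun p : ℕ ×ₗ ℕ =>
    if (ofLex p).2 = 0 then toLex ((ofLex p).1, 0) else toLex ((ofLex p).1 + 1, 0)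

theorem A18_monadicGodel :
    (∀ x : A18, gimp (qU x) x = ⊤) ∧
    (∀ x y : A18, qU (gimp x (qU y)) = gimp (qE x) (qU y)) ∧
    (∀ x y : A18, qU (gimp (qU x) y) = gimp (qU x) (qU y)) ∧
    (∀ x y : A18, qU (qE x ⊔ y) = qE x ⊔ qU y) := by
  have hle : ∀ p q : ℕ ×ₗ ℕ, ((p : A18) ≤ (q : A18)) ↔
      ((ofLex p).1 < (ofLex q).1 ∨ ((ofLex p).1 = (ofLex q).1 ∧ (ofLex p).2 ≤ (ofLex q).2)) :=
    fun p q => WithTop.coe_le_coe.trans Prod.Lex.le_iff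
  have hqU : ∀ p : ℕ ×ₗ ℕ, qU (p : A18) = ((toLex ((ofLex p).1, 0) : ℕ ×ₗ ℕ) : A18) :=
    fun p => rfl
  have hqUt : qU (⊤ : A18) = ⊤ := rfl
  have hqE : ∀ p : ℕ ×ₗ ℕ, qE (p : A18) =
      ((toLex (if (ofLex p).2 = 0 then (ofLex p).1 else (ofLex p).1 + 1, 0) : ℕ ×ₗ ℕ) : A18) := by
    intro p; by_cases h : (ofLex p).2 = 0 <;> simp [qE, h]
  have hqEt : qE (⊤ : A18) = ⊤ := rfl
  have hnt : ∀ p : ℕ ×ₗ ℕ, ¬ ((⊤ : A18) ≤ (p : A18)) := by simp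
  refine ⟨?_, ?_, ?_, ?_⟩
  · intro x
    induction x using WithTop.recTopCoe with
    | top => simp [gimp, hqUt]
    | coe p =>
      rw [hqU, gimp, if_pos]
      rw [hle]
      simp
  · intro x y
    induction x using WithTop.recTopCoe with
    | top =>
      induction y using WithTop.recTopCoe with
      | top => simp [gimp, hqUt, hqEt]
      | coe q => simp [gimp, hqUt, hqEt, hqU, hnt]
    | coe p =>
      induction y using WithTop.recTopCoe with
      | top => simp [gimp, hqUt, hqEt, hqE, le_top]
      | coe q =>
        rw [hqU q, gimp, gimp, hqE]
        by_cases hb : (ofLex p).2 = 0 <;> [rw [if_pos hb]; rw [if_neg hb]] <;>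
        · split_ifs with h1 h2 h2
          · exact hqUt
          · exfalso; rw [hle] at h1 h2; simp only [ofLex_toLex] at h1 h2; omega
          · exfalso; rw [hle] at h1 h2; simp only [ofLex_toLex] at h1 h2; omega
          · rw [hqU]; simp only [ofLex_toLex]
  · intro x y
    induction x using WithTop.recTopCoe with
    | top =>
      induction y using WithTop.recTopCoe with
      | top => simp [gimp, hqUt]
      | coe q => simp [gimp, hqUt, hqU, hnt]
    | coe p =>
      induction y using WithTop.recTopCoe with
      | top => simp [gimp, hqUt, hqU, le_top]
      | coe q =>
        rw [hqU p, hqU q, gimp, gimp]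
        split_ifs with h1 h2 h2
        · exact hqUt
        · exfalso; rw [hle] at h1 h2; simp only [ofLex_toLex] at h1 h2; omega
        · exfalso; rw [hle] at h1 h2; simp only [ofLex_toLex] at h1 h2; omega
        · rw [hqU]
  · intro x y
    induction x using WithTop.recTopCoe with
    | top =>
      induction y using WithTop.recTopCoe with
      | top => simp [hqUt, hqEt]
      | coe q => simp [hqUt, hqEt]
    | coe p =>
      induction y using WithTop.recTopCoe with
      | top => simp [hqUt, hqE]
      | coe q =>
        rw [hqE, hqU q]
        rcases le_total ((toLex (if (ofLex p).2 = 0 then (ofLex p).1 else (ofLex p).1 + 1, 0) : ℕ ×ₗ ℕ) : A18) ((q : ℕ ×ₗ ℕ) : A18) with h | h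
        · rw [sup_eq_right.2 h, hqU, sup_eq_right.2]
          rw [hle] at h ⊢
          simp only [ofLex_toLex] at h ⊢
          omega
        · rw [sup_eq_left.2 h, hqU, sup_eq_left.2]
          · simp only [ofLex_toLex]
          · rw [hle] at h ⊢
            simp only [ofLex_toLex] at h ⊢
            omega
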